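/- Fix δ² > α > 0. The function G(p) = p·log((δ² + (p−1)α)/(pα)) + log α is strictly increasing in p on (0,1), i.e., as p decreases toward 0, G(p) strictly decreases. -/

import Mathlib

theorem stmt9 (δsq α : ℝ) (hα : 0 < α) (hδ : α < δsq) :
    StrictMonoOn (fun p : ℝ => p * Real.log ((δsq + (p - 1) * α) / (p * α)) + Real.log α)
      (Set.Ioo (0 : ℝ) 1) := by
  set f : ℝ → ℝ := fun p => p * Real.log ((δsq + (p - 1) * α) / (p * α)) + Real.log α with hf
  have key : ∀ p ∈ Set.Ioo (0:ℝ) 1, HasDerivAt f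
      ((Real.log (δsq + (p-1)*α) - Real.log (p*α)) + p * (α/(δsq+(p-1)*α) - α/(p*α))) p := by
    intro p hp
    have hp0 : 0 < p := hp.1
    have hN : 0 < δsq + (p-1)*α := by nlinarith [hp.2]
    have hD : 0 < p * α := mul_pos hp0 hα
    have h1 : HasDerivAt (fun q : ℝ => δsq + (q-1)*α) α p := by
      simpa using (((hasDerivAt_id p).sub_const 1).mul_const α).const_add δsq
    have h1l : HasDerivAt (fun q : ℝ => Real.log (δsq + (q-1)*α)) (α/(δsq+(p-1)*α)) p :=
      h1.log hN.ne'
    have h2 : HasDerivAt (fun q : ℝ => q * α) α p := by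
      simpa using (hasDerivAt_id p).mul_const α
    have h2l : HasDerivAt (fun q : ℝ => Real.log (q*α)) (α/(p*α)) p := h2.log hD.ne'
    have hmul : HasDerivAt (fun q : ℝ => q * (Real.log (δsq + (q-1)*α) - Real.log (q*α)))
        ((Real.log (δsq + (p-1)*α) - Real.log (p*α)) + p * (α/(δsq+(p-1)*α) - α/(p*α))) p := by
      have hm : HasDerivAt (fun q : ℝ => q * (Real.log (δsq + (q-1)*α) - Real.log (q*α)))
          (1 * (Real.log (δsq + (p-1)*α) - Real.log (p*α)) + p * (α/(δsq+(p-1)*α) - α/(p*α))) p :=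
        (hasDerivAt_id' p).mul (h1l.sub h2l)
      simpa using hm
    have hg := hmul.add_const (Real.log α)
    apply hg.congr_of_eventuallyEq
    filter_upwards [isOpen_Ioo.mem_nhds hp] with q hq
    have hq0 : 0 < q := hq.1
    have hNq : 0 < δsq + (q-1)*α := by nlinarith [hq.2]
    have hDq : 0 < q * α := mul_pos hq0 hα
    simp only [hf]
    rw [Real.log_div hNq.ne' hDq.ne']
  apply strictMonoOn_of_deriv_pos (convex_Ioo 0 1)
  · exact fun p hp => (key p hp).continuousAt.continuousWithinAt
  · intro p hp
    rw [interior_Ioo] at hp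
    rw [(key p hp).deriv]
    have hp0 : 0 < p := hp.1
    have hN : 0 < δsq + (p-1)*α := by nlinarith [hp.2]
    have hD : 0 < p * α := mul_pos hp0 hα
    have hx1 : p * α / (δsq + (p-1)*α) < 1 := by
      rw [div_lt_one hN]; nlinarith
    have hlog := Real.log_lt_sub_one_of_pos (div_pos hD hN) (ne_of_lt hx1)
    rw [Real.log_div hD.ne' hN.ne'] at hlog
    have harith : p * (α/(δsq+(p-1)*α) - α/(p*α)) = p*α/(δsq+(p-1)*α) - 1 := by
      field_simp
    nlinarith [hlog]
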